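/- Let P be a slicing of a triangulated category D satisfying the octahedral axiom, such that every nonzero object of D admits a Harder–Narasimhan filtration. Fix θ ∈ ℝ and suppose given two full additive subcategories P⁻ and P⁺ of P(θ), closed under isomorphisms and direct summands, such that Hom(X⁻, X⁺) = 0 = Hom(X⁺, X⁻) for all X⁻ ∈ P⁻, X⁺ ∈ P⁺, and every object of P(θ) is isomorphic to a direct sum X⁻ ⊕ X⁺ with X⁻ ∈ P⁻ and X⁺ ∈ P⁺. Define D^{≤0} to be the strictly full subcategory of objects X such that X = 0 or every semistable HN-factor of X has phase > θ or lies in P⁻, and define D^{≥1} to be the strictly full subcategory of objects X such that X = 0 or every semistable HN-factor of X has phase < θ or lies in P⁺. Then (D^{≤0}, D^{≥1}[1]) is a t-structure on D. -/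

import Mathlib

open CategoryTheory CategoryTheory.Limits CategoryTheory.Pretriangulated

universe v u

variable (D : Type u) [Category.{v} D] [HasZeroObject D] [HasShift D ℤ] [Preadditive D]
  [∀ n : ℤ, (shiftFunctor D n).Additive] [Pretriangulated D]

/-- A slicing `P` of a triangulated category `D`: for every real number `φ`, a full additive
subcategory `P φ` (given by a predicate on objects), closed under isomorphisms, such that
(i) `P (φ + 1) = P φ ⟦1⟧` and (ii) `Hom(A₁, A₂) = 0` whenever `A₁ ∈ P φ₁`, `A₂ ∈ P φ₂` and
`φ₁ > φ₂`. -/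
structure Slicing where
  /-- the objects of the slice with phase `φ` -/
  P : ℝ → D → Prop
  mem_of_iso : ∀ {φ : ℝ} {X Y : D}, (X ≅ Y) → P φ X → P φ Y
  zero_mem : ∀ (φ : ℝ) (X : D), IsZero X → P φ X
  sum_mem : ∀ (φ : ℝ) (X Y : D), P φ X → P φ Y → P φ (X ⊞ Y)
  shift_mem : ∀ (φ : ℝ) (X : D), P φ X → P (φ + 1) (X⟦(1 : ℤ)⟧)
  shift_mem' : ∀ (φ : ℝ) (X : D), P (φ + 1) (X⟦(1 : ℤ)⟧) → P φ X
  hom_zero : ∀ {φ₁ φ₂ : ℝ}, φ₂ < φ₁ → ∀ {A₁ A₂ : D}, P φ₁ A₁ → P φ₂ A₂ →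
    ∀ f : A₁ ⟶ A₂, f = 0

variable {D}

/-- A Harder–Narasimhan filtration of a (necessarily nonzero) object `X` with respect to a
slicing `S`: a finite collection of distinguished triangles
`F (j+1) → F j → A j →⁺ (F (j+1))⟦1⟧` for `0 ≤ j ≤ n`, with `F 0 = X`, `F (n+1) = 0`, where
each `A j` is a nonzero object of `S.P (phase j)` and
`phase n > phase (n-1) > ⋯ > phase 0`.
(The semistable HN-factors are `A n, …, A 0`; `φ₊(X) = phase n` and `φ₋(X) = phase 0`.) -/
structure HNFiltration (S : Slicing D) (X : D) where
  /-- the number of steps: there are `n + 1` HN-factors `A 0, …, A n` -/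
  n : ℕ
  /-- the filtration objects -/
  F : ℕ → D
  /-- the semistable factors -/
  A : ℕ → D
  /-- the phases of the factors -/
  phase : ℕ → ℝ
  f : ∀ j : ℕ, F (j + 1) ⟶ F j
  g : ∀ j : ℕ, F j ⟶ A j
  h : ∀ j : ℕ, A j ⟶ (F (j + 1))⟦(1 : ℤ)⟧
  F_zero : F 0 = X
  isZero_top : IsZero (F (n + 1))
  mem : ∀ j ≤ n, S.P (phase j) (A j)
  nonzero : ∀ j ≤ n, ¬ IsZero (A j)
  dist : ∀ j ≤ n, (Triangle.mk (f j) (g j) (h j) ∈ distTriang D)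
  phase_lt : ∀ j : ℕ, j + 1 ≤ n → phase j < phase (j + 1)


section Aux10

open ZeroObject

set_option linter.unusedSectionVars false
set_option maxHeartbeats 1000000

lemma conj_dist (T : Triangle D) (hT : T ∈ distTriang D) {Y₁ Y₂ Y₃ : D}
    (e₁ : T.obj₁ ≅ Y₁) (e₂ : T.obj₂ ≅ Y₂) (e₃ : T.obj₃ ≅ Y₃) :
    Triangle.mk (e₁.inv ≫ T.mor₁ ≫ e₂.hom) (e₂.inv ≫ T.mor₂ ≫ e₃.hom)
      (e₃.inv ≫ T.mor₃ ≫ (shiftFunctor D (1 : ℤ)).map e₁.hom) ∈ distTriang D := by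
  refine isomorphic_distinguished _ hT _ ?_
  refine Triangle.isoMk _ _ e₁.symm e₂.symm e₃.symm ?_ ?_ ?_ <;> simp [Triangle.mk]

lemma isZero_shift {X : D} (n : ℤ) (h : IsZero X) : IsZero (X⟦n⟧) :=
  (shiftFunctor D n).map_isZero h

lemma isZero_of_shift {X : D} (n : ℤ) (h : IsZero (X⟦n⟧)) : IsZero X :=
  ((shiftFunctor D (-n)).map_isZero h).of_iso
    ((shiftFunctorCompIsoId D n (-n) (add_neg_cancel n)).app X).symm

lemma singleton_dist {Z X : D} (hZ : IsZero Z) :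
    Triangle.mk (0 : Z ⟶ X) (𝟙 X) (0 : X ⟶ Z⟦(1 : ℤ)⟧) ∈ distTriang D := by
  refine isomorphic_distinguished _ (inv_rot_of_distTriang _ (contractible_distinguished X)) _ ?_
  refine Triangle.isoMk _ _ (hZ.iso (isZero_shift _ (isZero_zero D))) (Iso.refl X) (Iso.refl X)
    (hZ.eq_of_src _ _) (by simp [invRotate, Triangle.mk]; rfl) ?_
  apply (isZero_shift (1 : ℤ) (isZero_shift _ (isZero_zero D))).eq_of_tgt

lemma deshift {X Y Z : D} {f₁ : X⟦(1:ℤ)⟧ ⟶ Y⟦(1:ℤ)⟧} {f₂ : Y⟦(1:ℤ)⟧ ⟶ Z⟦(1:ℤ)⟧}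
    {f₃ : Z⟦(1:ℤ)⟧ ⟶ X⟦(1:ℤ)⟧⟦(1:ℤ)⟧} (hd : Triangle.mk f₁ f₂ f₃ ∈ distTriang D) :
    ∃ (g₁ : X ⟶ Y) (g₂ : Y ⟶ Z) (g₃ : Z ⟶ X⟦(1:ℤ)⟧),
      Triangle.mk g₁ g₂ g₃ ∈ distTriang D := by
  have h2 := Pretriangulated.Triangle.shift_distinguished _ hd (-1)
  let u : ∀ W : D, W⟦(1:ℤ)⟧⟦(-1:ℤ)⟧ ≅ W := fun W =>
    (shiftFunctorCompIsoId D (1 : ℤ) (-1 : ℤ) (by norm_num)).app W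
  exact ⟨_, _, _, conj_dist _ h2 (u X) (u Y) (u Z)⟩

/-- If `Y` is zero then `X ⊞ Y ≅ X`. -/
noncomputable def biprodIsoLeft {X Y : D} (h : IsZero Y) : X ⊞ Y ≅ X where
  hom := biprod.fst
  inv := biprod.inl
  hom_inv_id := by
    apply biprod.hom_ext
    · simp
    · exact h.eq_of_tgt _ _
  inv_hom_id := by simp

/-- If `X` is zero then `X ⊞ Y ≅ Y`. -/
noncomputable def biprodIsoRight {X Y : D} (h : IsZero X) : X ⊞ Y ≅ Y where
  hom := biprod.snd
  inv := biprod.inr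
  hom_inv_id := by
    apply biprod.hom_ext
    · exact h.eq_of_tgt _ _
    · simp
  inv_hom_id := by simp

lemma phase_eq (S : Slicing D) {φ ψ : ℝ} {A : D} (h1 : S.P φ A) (h2 : S.P ψ A)
    (hnz : ¬ IsZero A) : φ = ψ := by
  by_contra hne
  rcases lt_or_gt_of_ne hne with h | h
  · exact hnz (by rw [IsZero.iff_id_eq_zero]; exact S.hom_zero h h2 h1 (𝟙 A))
  · exact hnz (by rw [IsZero.iff_id_eq_zero]; exact S.hom_zero h h1 h2 (𝟙 A))

lemma hnf_phase_le {S : Slicing D} {X : D} (H : HNFiltration S X) {i j : ℕ}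
    (hij : i ≤ j) (hj : j ≤ H.n) : H.phase i ≤ H.phase j := by
  obtain ⟨d, rfl⟩ := Nat.exists_eq_add_of_le hij
  clear hij
  induction d with
  | zero => exact le_of_eq (by rw [Nat.add_zero])
  | succ d ih =>
    exact le_trans (ih (by omega)) (le_of_lt (H.phase_lt (i + d) (by omega)))

section Hom

variable (S : Slicing D) (θ : ℝ) (Pm Pp : D → Prop)
  (hPmP : ∀ X : D, Pm X → S.P θ X) (hPpP : ∀ X : D, Pp X → S.P θ X)
  (hOrth₁ : ∀ {X Y : D} (f : X ⟶ Y), Pm X → Pp Y → f = 0)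

include hPmP hPpP hOrth₁ in
lemma homK {A B : D} (hA : (∃ φ, θ < φ ∧ S.P φ A) ∨ Pm A)
    (hB : (∃ φ, φ < θ ∧ S.P φ B) ∨ Pp B) (f : A ⟶ B) : f = 0 := by
  rcases hA with ⟨φ₁, hφ₁, m1⟩ | pm <;> rcases hB with ⟨φ₂, hφ₂, m2⟩ | pp
  · exact S.hom_zero (by linarith) m1 m2 f
  · exact S.hom_zero hφ₁ m1 (hPpP _ pp) f
  · exact S.hom_zero hφ₂ (hPmP _ pm) m2 f
  · exact hOrth₁ f pm pp

include hPmP hPpP hOrth₁ in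
lemma homL {A Y : D} (hA : (∃ φ, θ < φ ∧ S.P φ A) ∨ Pm A)
    (hY : IsZero Y ∨ ∃ HY : HNFiltration S Y, ∀ j ≤ HY.n, HY.phase j < θ ∨ Pp (HY.A j))
    (f : A ⟶ Y) : f = 0 := by
  rcases hY with hz | ⟨HY, hc⟩
  · exact hz.eq_of_tgt _ _
  have key : ∀ d j, j + d = HY.n + 1 → ∀ f : A ⟶ HY.F j, f = 0 := by
    intro d
    induction d with
    | zero =>
      intro j hj f
      obtain rfl : j = HY.n + 1 := by omega
      exact HY.isZero_top.eq_of_tgt _ _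
    | succ d ih =>
      intro j hj f
      have hjn : j ≤ HY.n := by omega
      have h1 : f ≫ HY.g j = 0 := by
        refine homK S θ Pm Pp hPmP hPpP hOrth₁ hA ?_ _
        rcases hc j hjn with h | h
        · exact Or.inl ⟨HY.phase j, h, HY.mem j hjn⟩
        · exact Or.inr h
      obtain ⟨g', hg'⟩ := Pretriangulated.Triangle.coyoneda_exact₂ _ (HY.dist j hjn) f h1
      have hg0 : g' = 0 := ih (j + 1) (by omega) g'
      rw [hg', hg0, zero_comp]; rfl
  have hf' : f ≫ eqToHom HY.F_zero.symm = 0 := key (HY.n + 1) 0 (by omega) _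
  calc f = (f ≫ eqToHom HY.F_zero.symm) ≫ eqToHom HY.F_zero := by simp
    _ = 0 := by rw [hf', zero_comp]

include hPmP hPpP hOrth₁ in
lemma homM {X Y : D}
    (hX : IsZero X ∨ ∃ HX : HNFiltration S X, ∀ j ≤ HX.n, θ < HX.phase j ∨ Pm (HX.A j))
    (hY : IsZero Y ∨ ∃ HY : HNFiltration S Y, ∀ j ≤ HY.n, HY.phase j < θ ∨ Pp (HY.A j))
    (f : X ⟶ Y) : f = 0 := by
  rcases hX with hz | ⟨HX, hc⟩
  · exact hz.eq_of_src _ _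
  have key : ∀ d j, j + d = HX.n + 1 → ∀ f : HX.F j ⟶ Y, f = 0 := by
    intro d
    induction d with
    | zero =>
      intro j hj f
      obtain rfl : j = HX.n + 1 := by omega
      exact HX.isZero_top.eq_of_src _ _
    | succ d ih =>
      intro j hj f
      have hjn : j ≤ HX.n := by omega
      have h1 : HX.f j ≫ f = 0 := ih (j + 1) (by omega) _
      obtain ⟨g', hg'⟩ := Pretriangulated.Triangle.yoneda_exact₂ _ (HX.dist j hjn) f h1
      have hg0 : g' = 0 := by
        refine homL S θ Pm Pp hPmP hPpP hOrth₁ ?_ hY g'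
        rcases hc j hjn with h | h
        · exact Or.inl ⟨HX.phase j, h, HX.mem j hjn⟩
        · exact Or.inr h
      rw [hg', hg0, comp_zero]; rfl
  have hf' : eqToHom HX.F_zero ≫ f = 0 := key (HX.n + 1) 0 (by omega) _
  calc f = eqToHom HX.F_zero.symm ≫ (eqToHom HX.F_zero ≫ f) := by simp
    _ = 0 := by rw [hf', comp_zero]

end Hom

/-- transporting an HN filtration along an isomorphism keeps factors and phases -/
lemma hnf_iso (S : Slicing D) {X Y : D} (e : X ≅ Y) (C : ℝ → D → Prop)
    (hX : ∃ HX : HNFiltration S X, ∀ j ≤ HX.n, C (HX.phase j) (HX.A j)) :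
    ∃ HY : HNFiltration S Y, ∀ j ≤ HY.n, C (HY.phase j) (HY.A j) := by
  obtain ⟨HX, hc⟩ := hX
  refine ⟨⟨HX.n,
    fun j => match j with | 0 => Y | j+1 => HX.F (j+1),
    HX.A, HX.phase,
    fun j => match j with
      | 0 => HX.f 0 ≫ eqToHom HX.F_zero ≫ e.hom
      | j+1 => HX.f (j+1),
    fun j => match j with
      | 0 => e.inv ≫ eqToHom HX.F_zero.symm ≫ HX.g 0
      | j+1 => HX.g (j+1),
    HX.h, rfl, HX.isZero_top, HX.mem, HX.nonzero, ?_, HX.phase_lt⟩, hc⟩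
  rintro (_|j) hj
  · refine isomorphic_distinguished _ (HX.dist 0 (Nat.zero_le _)) _ ?_
    refine Triangle.isoMk _ _ (Iso.refl _) (e.symm ≪≫ eqToIso HX.F_zero.symm) (Iso.refl _)
      ?_ ?_ ?_ <;> simp [Triangle.mk]
  · exact HX.dist (j+1) hj

/-- shifting an HN filtration by 1 -/
lemma hnf_shift_up (S : Slicing D) {X : D} (H : HNFiltration S X) :
    ∃ HY : HNFiltration S (X⟦(1:ℤ)⟧), HY.n = H.n ∧ ∀ j,
      HY.phase j = H.phase j + 1 ∧ HY.A j = (H.A j)⟦(1:ℤ)⟧ := by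
  refine ⟨⟨H.n, fun j => (H.F j)⟦(1:ℤ)⟧, fun j => (H.A j)⟦(1:ℤ)⟧, fun j => H.phase j + 1,
    fun j => ((Triangle.shiftFunctor D 1).obj (Triangle.mk (H.f j) (H.g j) (H.h j))).mor₁,
    fun j => ((Triangle.shiftFunctor D 1).obj (Triangle.mk (H.f j) (H.g j) (H.h j))).mor₂,
    fun j => ((Triangle.shiftFunctor D 1).obj (Triangle.mk (H.f j) (H.g j) (H.h j))).mor₃,
    congrArg (shiftFunctor D (1:ℤ)).obj H.F_zero, isZero_shift _ H.isZero_top,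
    fun j hj => S.shift_mem _ _ (H.mem j hj),
    fun j hj hz => H.nonzero j hj (isZero_of_shift _ hz),
    fun j hj => Pretriangulated.Triangle.shift_distinguished _ (H.dist j hj) 1,
    fun j hj => by
      have := H.phase_lt j hj
      show H.phase j + 1 < H.phase (j+1) + 1
      linarith⟩, rfl, fun j => ⟨rfl, rfl⟩⟩

/-- shifting an HN filtration by -1 -/
lemma hnf_shift_down (S : Slicing D) {X : D} (H : HNFiltration S X) :
    ∃ HY : HNFiltration S (X⟦(-1:ℤ)⟧), HY.n = H.n ∧ ∀ j,
      HY.phase j = H.phase j - 1 ∧ HY.A j = (H.A j)⟦(-1:ℤ)⟧ := by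
  refine ⟨⟨H.n, fun j => (H.F j)⟦(-1:ℤ)⟧, fun j => (H.A j)⟦(-1:ℤ)⟧, fun j => H.phase j - 1,
    fun j => ((Triangle.shiftFunctor D (-1)).obj (Triangle.mk (H.f j) (H.g j) (H.h j))).mor₁,
    fun j => ((Triangle.shiftFunctor D (-1)).obj (Triangle.mk (H.f j) (H.g j) (H.h j))).mor₂,
    fun j => ((Triangle.shiftFunctor D (-1)).obj (Triangle.mk (H.f j) (H.g j) (H.h j))).mor₃,
    congrArg (shiftFunctor D (-1:ℤ)).obj H.F_zero, isZero_shift _ H.isZero_top,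
    fun j hj => S.shift_mem' _ _ (by
      rw [sub_add_cancel]
      exact S.mem_of_iso
        ((shiftFunctorCompIsoId D (-1:ℤ) (1:ℤ) (by norm_num)).app (H.A j)).symm
        (H.mem j hj)),
    fun j hj hz => H.nonzero j hj (isZero_of_shift _ hz),
    fun j hj => Pretriangulated.Triangle.shift_distinguished _ (H.dist j hj) (-1),
    fun j hj => by
      have := H.phase_lt j hj
      show H.phase j - 1 < H.phase (j+1) - 1
      linarith⟩, rfl, fun j => ⟨rfl, rfl⟩⟩

/-- the tail of an HN filtration is an HN filtration of `F k` -/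
lemma hnf_tail (S : Slicing D) {X : D} (H : HNFiltration S X) (k : ℕ) (hk : k ≤ H.n) :
    ∃ HU : HNFiltration S (H.F k), HU.n = H.n - k ∧ ∀ j,
      HU.phase j = H.phase (k + j) ∧ HU.A j = H.A (k + j) := by
  refine ⟨⟨H.n - k, fun j => H.F (k + j), fun j => H.A (k + j), fun j => H.phase (k + j),
    fun j => H.f (k + j), fun j => H.g (k + j), fun j => H.h (k + j),
    rfl, ?_, fun j hj => H.mem (k + j) (by omega), fun j hj => H.nonzero (k + j) (by omega),
    fun j hj => H.dist (k + j) (by omega), fun j hj => H.phase_lt (k + j) (by omega)⟩,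
    rfl, fun j => ⟨rfl, rfl⟩⟩
  show IsZero (H.F (k + (H.n - k + 1)))
  rw [show k + (H.n - k + 1) = H.n + 1 from by omega]
  exact H.isZero_top

/-- the tail of an HN filtration, with the bottom step replaced by a given triangle -/
lemma hnf_tail_ext (S : Slicing D) (θ : ℝ) {X : D} (H : HNFiltration S X) (k : ℕ)
    (hk : k ≤ H.n) {W Am : D}
    (wf : H.F (k + 1) ⟶ W) (wg : W ⟶ Am) (wh : Am ⟶ (H.F (k + 1))⟦(1:ℤ)⟧)
    (hwd : Triangle.mk wf wg wh ∈ distTriang D) (hAm : S.P θ Am) (hnzm : ¬ IsZero Am)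
    (hθk1 : 1 ≤ H.n - k → θ < H.phase (k + 1)) :
    ∃ HU : HNFiltration S W, HU.n = H.n - k ∧ HU.phase 0 = θ ∧ HU.A 0 = Am ∧
      ∀ j, HU.phase (j + 1) = H.phase (k + j + 1) ∧ HU.A (j + 1) = H.A (k + j + 1) := by
  refine ⟨⟨H.n - k,
    fun j => match j with | 0 => W | j+1 => H.F (k + j + 1),
    fun j => match j with | 0 => Am | j+1 => H.A (k + j + 1),
    fun j => match j with | 0 => θ | j+1 => H.phase (k + j + 1),
    fun j => match j with | 0 => wf | j+1 => H.f (k + j + 1),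
    fun j => match j with | 0 => wg | j+1 => H.g (k + j + 1),
    fun j => match j with | 0 => wh | j+1 => H.h (k + j + 1),
    rfl, ?_, ?_, ?_, ?_, ?_⟩, rfl, rfl, rfl, fun j => ⟨rfl, rfl⟩⟩
  · rcases Nat.eq_zero_or_pos (H.n - k) with h0 | h0
    · rw [h0]
      have : k + 0 + 1 = H.n + 1 := by omega
      rw [show (0:ℕ) + 1 = 0 + 1 from rfl]
      show IsZero (H.F (k + 0 + 1))
      rw [this]; exact H.isZero_top
    · obtain ⟨m, hm⟩ : ∃ m, H.n - k = m + 1 := ⟨H.n - k - 1, by omega⟩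
      rw [hm]
      show IsZero (H.F (k + (m + 1) + 1))
      rw [show k + (m + 1) + 1 = H.n + 1 from by omega]
      exact H.isZero_top
  · rintro (_|j) hj
    · exact hAm
    · exact H.mem (k + j + 1) (by omega)
  · rintro (_|j) hj
    · exact hnzm
    · exact H.nonzero (k + j + 1) (by omega)
  · rintro (_|j) hj
    · exact hwd
    · exact H.dist (k + j + 1) (by omega)
  · rintro (_|j) hj
    · exact hθk1 (by omega)
    · exact H.phase_lt (k + j + 1) (by omega)

/-- Main cone construction: given a chain of triangles with semistable low-phase factors,
plus an optional top extension by a `Pp`-factor, the cone of the composite admits an HN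
filtration with small factors. -/
lemma buildV [IsTriangulated D] (S : Slicing D) (θ : ℝ) (Pp : D → Prop) :
    ∀ (K : ℕ) (F A : ℕ → D) (φ : ℕ → ℝ)
      (f : ∀ j : ℕ, F (j+1) ⟶ F j) (g : ∀ j : ℕ, F j ⟶ A j)
      (h : ∀ j : ℕ, A j ⟶ (F (j+1))⟦(1:ℤ)⟧)
      (_ : ∀ j < K, Triangle.mk (f j) (g j) (h j) ∈ distTriang D)
      (_ : ∀ j < K, S.P (φ j) (A j))
      (_ : ∀ j < K, ¬ IsZero (A j))
      (_ : ∀ j, j + 1 < K → φ j < φ (j+1))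
      (_ : ∀ j < K, φ j < θ)
      (μ : ℝ) (_ : μ < θ) (_ : ∀ j < K, μ < φ j)
      (W B : D) (w : W ⟶ F K) (gB : F K ⟶ B) (hB : B ⟶ W⟦(1:ℤ)⟧)
      (_ : Triangle.mk w gB hB ∈ distTriang D)
      (_ : IsZero B ∨ (S.P θ B ∧ Pp B ∧ ¬ IsZero B)),
    ∃ (V : D) (a : W ⟶ F 0) (b : F 0 ⟶ V) (c : V ⟶ W⟦(1:ℤ)⟧),
      (Triangle.mk a b c ∈ distTriang D) ∧
      (IsZero V ∨ ∃ HV : HNFiltration S V,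
        (∀ j ≤ HV.n, HV.phase j < θ ∨ Pp (HV.A j)) ∧ (∀ j ≤ HV.n, μ < HV.phase j)) := by
  intro K
  induction K with
  | zero =>
    intro F A φ f g h hdist hmem hnz hlt hθc μ hμθ hμ W B w gB hB hdistB hBc
    refine ⟨B, w, gB, hB, hdistB, ?_⟩
    rcases hBc with hz | ⟨hm, hp, hnzB⟩
    · exact Or.inl hz
    · refine Or.inr ⟨⟨0,
        fun j => match j with | 0 => B | _+1 => (0 : D),
        fun _ => B, fun _ => θ,
        fun j => 0,
        fun j => match j with | 0 => 𝟙 B | _+1 => 0,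
        fun j => 0,
        rfl, isZero_zero D, fun _ _ => hm, fun _ _ => hnzB, ?_, fun j hj => by omega⟩,
        fun _ _ => Or.inr hp, fun _ _ => hμθ⟩
      rintro (_|j) hj
      · exact singleton_dist (isZero_zero D)
      · omega
  | succ K ih =>
    intro F A φ f g h hdist hmem hnz hlt hθc μ hμθ hμ W B w gB hB hdistB hBc
    have hφ0 : ∀ j, j < K → φ 0 < φ (j+1) := by
      intro j hj
      induction j with
      | zero => exact hlt 0 (by omega)
      | succ i ihi => exact lt_trans (ihi (by omega)) (hlt (i+1) (by omega))
    obtain ⟨V₁, a₁, b₁, c₁, hd₁, hV₁⟩ := ih (fun j => F (j+1)) (fun j => A (j+1))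
      (fun j => φ (j+1)) (fun j => f (j+1)) (fun j => g (j+1)) (fun j => h (j+1))
      (fun j hj => hdist (j+1) (by omega)) (fun j hj => hmem (j+1) (by omega))
      (fun j hj => hnz (j+1) (by omega)) (fun j hj => hlt (j+1) (by omega))
      (fun j hj => hθc (j+1) (by omega)) (φ 0) (hθc 0 (by omega)) (fun j hj => hφ0 j hj)
      W B w gB hB hdistB hBc
    obtain ⟨V, b, c, hdV⟩ := distinguished_cocone_triangle (a₁ ≫ f 0)
    have O := Triangulated.someOctahedron rfl hd₁ (hdist 0 (by omega)) hdV
    refine ⟨V, a₁ ≫ f 0, b, c, hdV, Or.inr ?_⟩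
    rcases hV₁ with hz | ⟨HV₁, hc₁, hb₁⟩
    · refine ⟨⟨0,
        fun j => match j with | 0 => V | _+1 => V₁,
        fun _ => A 0, fun _ => φ 0,
        fun j => match j with | 0 => O.m₁ | _+1 => 𝟙 V₁,
        fun j => match j with | 0 => O.m₃ | _+1 => 0,
        fun j => match j with
          | 0 => h 0 ≫ (shiftFunctor D (1:ℤ)).map b₁
          | _+1 => 0,
        rfl, hz, fun _ _ => hmem 0 (by omega), fun _ _ => hnz 0 (by omega), ?_,
        fun j hj => by omega⟩,
        fun _ _ => Or.inl (hθc 0 (by omega)), fun _ _ => hμ 0 (by omega)⟩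
      rintro (_|j) hj
      · exact O.mem
      · omega
    · refine ⟨⟨HV₁.n + 1,
        fun j => match j with | 0 => V | j+1 => HV₁.F j,
        fun j => match j with | 0 => A 0 | j+1 => HV₁.A j,
        fun j => match j with | 0 => φ 0 | j+1 => HV₁.phase j,
        fun j => match j with | 0 => eqToHom HV₁.F_zero ≫ O.m₁ | j+1 => HV₁.f j,
        fun j => match j with | 0 => O.m₃ | j+1 => HV₁.g j,
        fun j => match j with
          | 0 => (h 0 ≫ (shiftFunctor D (1:ℤ)).map b₁) ≫
              (shiftFunctor D (1:ℤ)).map (eqToHom HV₁.F_zero.symm)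
          | j+1 => HV₁.h j,
        rfl, HV₁.isZero_top, ?_, ?_, ?_, ?_⟩, ?_, ?_⟩
      · rintro (_|j) hj
        · exact hmem 0 (by omega)
        · exact HV₁.mem j (by omega)
      · rintro (_|j) hj
        · exact hnz 0 (by omega)
        · exact HV₁.nonzero j (by omega)
      · rintro (_|j) hj
        · refine isomorphic_distinguished _ O.mem _ ?_
          refine Triangle.isoMk _ _ (eqToIso HV₁.F_zero) (Iso.refl _) (Iso.refl _)
            ?_ ?_ ?_
          · simp [Triangle.mk]
          · simp [Triangle.mk]
          · dsimp [Triangle.mk]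
            simp only [Category.id_comp, Category.assoc, ← Functor.map_comp,
              eqToHom_trans, eqToHom_refl, Functor.map_id, Category.comp_id]
        · exact HV₁.dist j (by omega)
      · rintro (_|j) hj
        · exact hb₁ 0 (Nat.zero_le _)
        · exact HV₁.phase_lt j (by omega)
      · rintro (_|j) hj
        · exact Or.inl (hθc 0 (by omega))
        · change j + 1 ≤ HV₁.n + 1 at hj
          exact hc₁ j (by omega)
      · rintro (_|j) hj
        · exact hμ 0 (by omega)
        · change j + 1 ≤ HV₁.n + 1 at hj
          exact lt_trans (hμ 0 (by omega)) (hb₁ j (by omega))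

end Aux10

/-- `IsTStructure D Dle Dge` asserts that the pair of (iso-closed) subcategories
`(D^{≤0}, D^{≥1}[1])`, where `Dle = D^{≤0}` and `Dge = D^{≥1}`, is a t-structure on `D`:
both predicates are closed under isomorphisms (strict fullness), `D^{≤0} ⊆ D^{≤1}`
(equivalently `Dle X → Dle (X⟦1⟧)`), `D^{≥1} ⊆ D^{≥0}` (equivalently `Dge X → Dge (X⟦-1⟧)`),
`Hom(D^{≤0}, D^{≥1}) = 0`, and every object `X` sits in a distinguished triangle
`U → X → V →⁺` with `U ∈ D^{≤0}` and `V ∈ D^{≥1}`. -/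
structure IsTStructure {D : Type u} [Category.{v} D] [HasZeroObject D] [HasShift D ℤ]
    [Preadditive D] [∀ n : ℤ, (shiftFunctor D n).Additive] [Pretriangulated D]
    (Dle Dge : D → Prop) : Prop where
  le_iso : ∀ {X Y : D}, (X ≅ Y) → Dle X → Dle Y
  ge_iso : ∀ {X Y : D}, (X ≅ Y) → Dge X → Dge Y
  le_shift : ∀ X : D, Dle X → Dle (X⟦(1 : ℤ)⟧)
  ge_shift : ∀ X : D, Dge X → Dge (X⟦(-1 : ℤ)⟧)
  hom_zero : ∀ {X Y : D} (f : X ⟶ Y), Dle X → Dge Y → f = 0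
  exists_triangle : ∀ X : D, ∃ (U V : D) (a : U ⟶ X) (b : X ⟶ V) (c : V ⟶ U⟦(1 : ℤ)⟧),
    Dle U ∧ Dge V ∧ (Triangle.mk a b c ∈ distTriang D)

/-!
STATEMENT 10 (Proposition on the construction of t-structures):
Let `S` be a slicing of a triangulated category `D` (octahedral axiom) such that every
nonzero object admits a Harder–Narasimhan filtration. Fix `θ : ℝ` and full additive
subcategories `P⁻`, `P⁺` of `P θ`, closed under isomorphisms and direct summands, which are
mutually orthogonal and such that every object of `P θ` decomposes as `X⁻ ⊕ X⁺`. Let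
`D^{≤0}` consist of the objects `X` with `X = 0` or all semistable HN-factors of `X` of
phase `> θ` or in `P⁻`, and let `D^{≥1}` consist of the `X` with `X = 0` or all semistable
HN-factors of phase `< θ` or in `P⁺`. Then `(D^{≤0}, D^{≥1}[1])` is a t-structure on `D`.
-/

open ZeroObject in
theorem statement10
    {D : Type u} [Category.{v} D] [HasZeroObject D] [HasShift D ℤ] [Preadditive D]
    [∀ n : ℤ, (shiftFunctor D n).Additive] [Pretriangulated D] [IsTriangulated D]
    (S : Slicing D)
    (hHNF : ∀ X : D, ¬ IsZero X → Nonempty (HNFiltration S X))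
    (θ : ℝ) (Pm Pp : D → Prop)
    (hPmP : ∀ X : D, Pm X → S.P θ X) (hPpP : ∀ X : D, Pp X → S.P θ X)
    (hPmIso : ∀ {X Y : D}, (X ≅ Y) → Pm X → Pm Y)
    (hPpIso : ∀ {X Y : D}, (X ≅ Y) → Pp X → Pp Y)
    (hPmZero : ∀ X : D, IsZero X → Pm X) (hPpZero : ∀ X : D, IsZero X → Pp X)
    (hPmSum : ∀ X Y : D, Pm X → Pm Y → Pm (X ⊞ Y))
    (hPpSum : ∀ X Y : D, Pp X → Pp Y → Pp (X ⊞ Y))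
    (hPmSummand : ∀ X Y : D, Pm (X ⊞ Y) → Pm X ∧ Pm Y)
    (hPpSummand : ∀ X Y : D, Pp (X ⊞ Y) → Pp X ∧ Pp Y)
    (hOrth₁ : ∀ {X Y : D} (f : X ⟶ Y), Pm X → Pp Y → f = 0)
    (hOrth₂ : ∀ {X Y : D} (f : X ⟶ Y), Pp X → Pm Y → f = 0)
    (hDecomp : ∀ X : D, S.P θ X → ∃ (X₁ X₂ : D), Pm X₁ ∧ Pp X₂ ∧ Nonempty (X ≅ X₁ ⊞ X₂)) :
    IsTStructure
      (fun X : D => IsZero X ∨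
        ∃ HX : HNFiltration S X, ∀ j ≤ HX.n, θ < HX.phase j ∨ Pm (HX.A j))
      (fun X : D => IsZero X ∨
        ∃ HX : HNFiltration S X, ∀ j ≤ HX.n, HX.phase j < θ ∨ Pp (HX.A j)) := by
  classical
  have hOrth₁' : ∀ {X Y : D} (f : X ⟶ Y), Pm X → Pp Y → f = 0 := fun f a b => hOrth₁ f a b
  refine ⟨?_, ?_, ?_, ?_, ?_, ?_⟩
  · -- le_iso
    rintro X Y e (hz | hH)
    · exact Or.inl (hz.of_iso e.symm)
    · exact Or.inr (hnf_iso S e (fun φ A => θ < φ ∨ Pm A) hH)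
  · -- ge_iso
    rintro X Y e (hz | hH)
    · exact Or.inl (hz.of_iso e.symm)
    · exact Or.inr (hnf_iso S e (fun φ A => φ < θ ∨ Pp A) hH)
  · -- le_shift
    rintro X (hz | ⟨HX, hc⟩)
    · exact Or.inl (isZero_shift 1 hz)
    · obtain ⟨HY, hn, hfac⟩ := hnf_shift_up S HX
      refine Or.inr ⟨HY, ?_⟩
      intro j hj
      have hj' : j ≤ HX.n := by omega
      left
      rw [(hfac j).1]
      rcases hc j hj' with h | h
      · linarith
      · have : HX.phase j = θ := phase_eq S (HX.mem j hj') (hPmP _ h) (HX.nonzero j hj')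
        rw [this]
        linarith
  · -- ge_shift
    rintro X (hz | ⟨HX, hc⟩)
    · exact Or.inl (isZero_shift (-1) hz)
    · obtain ⟨HY, hn, hfac⟩ := hnf_shift_down S HX
      refine Or.inr ⟨HY, ?_⟩
      intro j hj
      have hj' : j ≤ HX.n := by omega
      left
      rw [(hfac j).1]
      rcases hc j hj' with h | h
      · linarith
      · have : HX.phase j = θ := phase_eq S (HX.mem j hj') (hPpP _ h) (HX.nonzero j hj')
        rw [this]
        linarith
  · -- hom_zero
    intro X Y f hX hY
    exact homM S θ Pm Pp hPmP hPpP hOrth₁' hX hY f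
  · -- exists_triangle
    intro X
    by_cases hX : IsZero X
    · exact ⟨X, 0, 𝟙 X, 0, 0, Or.inl hX, Or.inl (isZero_zero D),
        contractible_distinguished X⟩
    obtain ⟨H⟩ := hHNF X hX
    have hQ : ∃ j, H.n < j ∨ θ ≤ H.phase j := ⟨H.n + 1, Or.inl (Nat.lt_succ_self _)⟩
    set k := Nat.find hQ with hkdef
    have hkmax : k ≤ H.n + 1 := Nat.find_le (Or.inl (Nat.lt_succ_self _))
    have hbelow : ∀ j, j < k → j ≤ H.n ∧ H.phase j < θ := by
      intro j hj
      have h1 := Nat.find_min hQ hj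
      push_neg at h1
      exact ⟨by omega, h1.2⟩
    have hchain_dist : ∀ j, j < k → Triangle.mk (H.f j) (H.g j) (H.h j) ∈ distTriang D :=
      fun j hj => H.dist j (hbelow j hj).1
    have hchain_mem : ∀ j, j < k → S.P (H.phase j) (H.A j) :=
      fun j hj => H.mem j (hbelow j hj).1
    have hchain_nz : ∀ j, j < k → ¬ IsZero (H.A j) :=
      fun j hj => H.nonzero j (hbelow j hj).1
    have hchain_lt : ∀ j, j + 1 < k → H.phase j < H.phase (j + 1) :=
      fun j hj => H.phase_lt j (by have := (hbelow (j+1) hj).1; omega)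
    have hchain_θ : ∀ j, j < k → H.phase j < θ := fun j hj => (hbelow j hj).2
    set μ := min (H.phase 0) θ - 1 with hμdef
    have hμθ : μ < θ := by
      have := min_le_right (H.phase 0) θ
      simp only [hμdef]
      linarith
    have hμφ : ∀ j, j < k → μ < H.phase j := by
      intro j hj
      have h0 : H.phase 0 ≤ H.phase j := hnf_phase_le H (Nat.zero_le _) (hbelow j hj).1
      have := min_le_left (H.phase 0) θ
      simp only [hμdef]
      linarith
    rcases Nat.lt_or_ge H.n k with hcase | hkn
    · -- k = H.n + 1, U = F k is zero
      have hk1 : k = H.n + 1 := by omega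
      obtain ⟨V, a, b, c, hdV, hgeV⟩ := buildV S θ Pp k H.F H.A H.phase H.f H.g H.h
        hchain_dist hchain_mem hchain_nz hchain_lt hchain_θ μ hμθ hμφ
        (H.F k) (0 : D) (𝟙 _) 0 0 (contractible_distinguished (H.F k))
        (Or.inl (isZero_zero D))
      refine ⟨H.F k, V, _, _, _, Or.inl (by rw [hk1]; exact H.isZero_top), ?_,
        conj_dist _ hdV (Iso.refl _) (eqToIso H.F_zero) (Iso.refl _)⟩
      rcases hgeV with hz | ⟨HV, h1, _⟩
      · exact Or.inl hz
      · exact Or.inr ⟨HV, h1⟩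
    · -- k ≤ H.n
      have hθk : θ ≤ H.phase k := by
        rcases Nat.find_spec hQ with h | h
        · omega
        · exact h
      rcases lt_or_eq_of_le hθk with hθlt | hθeq
      · -- θ < phase k : no split, U = F k
        obtain ⟨V, a, b, c, hdV, hgeV⟩ := buildV S θ Pp k H.F H.A H.phase H.f H.g H.h
          hchain_dist hchain_mem hchain_nz hchain_lt hchain_θ μ hμθ hμφ
          (H.F k) (0 : D) (𝟙 _) 0 0 (contractible_distinguished (H.F k))
          (Or.inl (isZero_zero D))
        obtain ⟨HU, hn, hfac⟩ := hnf_tail S H k hkn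
        refine ⟨H.F k, V, _, _, _, Or.inr ⟨HU, ?_⟩, ?_,
          conj_dist _ hdV (Iso.refl _) (eqToIso H.F_zero) (Iso.refl _)⟩
        · intro j hj
          left
          rw [(hfac j).1]
          calc θ < H.phase k := hθlt
            _ ≤ H.phase (k + j) := hnf_phase_le H (by omega) (by omega)
        · rcases hgeV with hz | ⟨HV, h1, _⟩
          · exact Or.inl hz
          · exact Or.inr ⟨HV, h1⟩
      · -- phase k = θ
        have hmemk : S.P θ (H.A k) := by rw [hθeq]; exact H.mem k hkn
        obtain ⟨X₁, X₂, pm, pp, ⟨e⟩⟩ := hDecomp (H.A k) hmemk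
        by_cases hz2 : IsZero X₂
        · -- A k is in Pm ; U = F k
          have pmk : Pm (H.A k) := hPmIso (e ≪≫ biprodIsoLeft hz2).symm pm
          obtain ⟨V, a, b, c, hdV, hgeV⟩ := buildV S θ Pp k H.F H.A H.phase H.f H.g H.h
            hchain_dist hchain_mem hchain_nz hchain_lt hchain_θ μ hμθ hμφ
            (H.F k) (0 : D) (𝟙 _) 0 0 (contractible_distinguished (H.F k))
            (Or.inl (isZero_zero D))
          obtain ⟨HU, hn, hfac⟩ := hnf_tail S H k hkn
          refine ⟨H.F k, V, _, _, _, Or.inr ⟨HU, ?_⟩, ?_,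
            conj_dist _ hdV (Iso.refl _) (eqToIso H.F_zero) (Iso.refl _)⟩
          · rintro (_|j) hj
            · right
              rw [(hfac 0).2, Nat.add_zero]
              exact pmk
            · left
              rw [(hfac (j+1)).1]
              have h1 : H.phase k < H.phase (k + 1) := H.phase_lt k (by omega)
              have h2 : H.phase (k + 1) ≤ H.phase (k + (j + 1)) :=
                hnf_phase_le H (by omega) (by omega)
              linarith [hθeq]
          · rcases hgeV with hz | ⟨HV, h1, _⟩
            · exact Or.inl hz
            · exact Or.inr ⟨HV, h1⟩
        · by_cases hz1 : IsZero X₁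
          · -- A k is in Pp ; U = F (k+1)
            have ppk : Pp (H.A k) := hPpIso (e ≪≫ biprodIsoRight hz1).symm pp
            obtain ⟨V, a, b, c, hdV, hgeV⟩ := buildV S θ Pp k H.F H.A H.phase H.f H.g H.h
              hchain_dist hchain_mem hchain_nz hchain_lt hchain_θ μ hμθ hμφ
              (H.F (k+1)) (H.A k) (H.f k) (H.g k) (H.h k) (H.dist k hkn)
              (Or.inr ⟨hmemk, ppk, H.nonzero k hkn⟩)
            have hDleU : IsZero (H.F (k+1)) ∨
                ∃ HU : HNFiltration S (H.F (k+1)), ∀ j ≤ HU.n,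
                  θ < HU.phase j ∨ Pm (HU.A j) := by
              rcases Nat.lt_or_ge H.n (k+1) with hc2 | hc2
              · exact Or.inl (by rw [show k + 1 = H.n + 1 from by omega]; exact H.isZero_top)
              · obtain ⟨HU, hn, hfac⟩ := hnf_tail S H (k+1) hc2
                refine Or.inr ⟨HU, ?_⟩
                intro j hj
                left
                rw [(hfac j).1]
                have h1 : H.phase k < H.phase (k + 1) := H.phase_lt k (by omega)
                have h2 : H.phase (k + 1) ≤ H.phase (k + 1 + j) :=
                  hnf_phase_le H (by omega) (by omega)
                linarith [hθeq]
            refine ⟨H.F (k+1), V, _, _, _, hDleU, ?_,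
              conj_dist _ hdV (Iso.refl _) (eqToIso H.F_zero) (Iso.refl _)⟩
            rcases hgeV with hz | ⟨HV, h1, _⟩
            · exact Or.inl hz
            · exact Or.inr ⟨HV, h1⟩
          · -- genuine splitting
            have pθ2 : S.P θ X₂ := hPpP _ pp
            have T2 : Triangle.mk (biprod.inl ≫ e.inv) (e.hom ≫ biprod.snd)
                (0 : X₂ ⟶ X₁⟦(1:ℤ)⟧) ∈ distTriang D := by
              refine isomorphic_distinguished _
                (binaryBiproductTriangle_distinguished X₁ X₂) _ ?_
              exact Triangle.isoMk _ _ (Iso.refl _) e (Iso.refl _)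
                (by simp [Triangle.mk, binaryBiproductTriangle]) (by simp [Triangle.mk, binaryBiproductTriangle])
                (by simp [Triangle.mk, binaryBiproductTriangle])
            obtain ⟨W, w, δ, hT3⟩ :=
              distinguished_cocone_triangle₁ (H.g k ≫ (e.hom ≫ biprod.snd))
            have h12 : Triangle.mk (H.g k) (H.h k) (-(H.f k)⟦(1:ℤ)⟧') ∈ distTriang D :=
              rot_of_distTriang _ (H.dist k hkn)
            have h23 : Triangle.mk (e.hom ≫ biprod.snd) (0 : X₂ ⟶ X₁⟦(1:ℤ)⟧)
                (-(biprod.inl ≫ e.inv)⟦(1:ℤ)⟧') ∈ distTriang D :=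
              rot_of_distTriang _ T2
            have h13 : Triangle.mk (H.g k ≫ (e.hom ≫ biprod.snd)) δ (-w⟦(1:ℤ)⟧') ∈
                distTriang D := rot_of_distTriang _ hT3
            have O := Triangulated.someOctahedron rfl h12 h23 h13
            obtain ⟨v1, v2, v3, hWd⟩ := deshift O.mem
            obtain ⟨V, a, b, c, hdV, hgeV⟩ := buildV S θ Pp k H.F H.A H.phase H.f H.g H.h
              hchain_dist hchain_mem hchain_nz hchain_lt hchain_θ μ hμθ hμφ
              W X₂ w (H.g k ≫ (e.hom ≫ biprod.snd)) δ hT3 (Or.inr ⟨pθ2, pp, hz2⟩)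
            obtain ⟨HU, hn, h0p, h0A, hfac⟩ := hnf_tail_ext S θ H k hkn v1 v2 v3 hWd
              (hPmP _ pm) hz1
              (fun h1 => by
                have := H.phase_lt k (by omega)
                linarith [hθeq])
            refine ⟨W, V, _, _, _, Or.inr ⟨HU, ?_⟩, ?_,
              conj_dist _ hdV (Iso.refl _) (eqToIso H.F_zero) (Iso.refl _)⟩
            · rintro (_|j) hj
              · right
                rw [h0A]
                exact pm
              · left
                rw [(hfac j).1]
                have h1 : H.phase k < H.phase (k + 1) := H.phase_lt k (by omega)
                have h2 : H.phase (k + 1) ≤ H.phase (k + j + 1) :=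
                  hnf_phase_le H (by omega) (by omega)
                linarith [hθeq]
            · rcases hgeV with hz | ⟨HV, h1, _⟩
              · exact Or.inl hz
              · exact Or.inr ⟨HV, h1⟩
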